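/- arXiv:2109.01200 — 4 statements merged into one kernel-verified Lean document; each statement's English description precedes it below -/
import Mathlib

section
/- Let A ⊆ ℕ be finite with 0 ∈ A, and suppose A is a building block of a nonempty M ⊆ ℤ witnessed by the sequence (a_i)_{i∈ℤ}. Then for every i ∈ ℤ and every 0 ≤ n ≤ max(A) with a_{i+1} − a_i > max(A), one has n + a_i ∈ M if and only if n ∈ A. -/
open Filter ArithmeticFunction

open scoped Classical in
noncomputable def mobiusSum (M : Set ℤ) (N : ℕ) : ℝ :=
  (N : ℝ)⁻¹ * ∑ n ∈ Finset.Icc 1 N, if (n : ℤ) ∈ M then (moebius n : ℝ) else 0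

def MobiusOrtho (M : Set ℤ) : Prop := Tendsto (mobiusSum M) atTop (nhds 0)

def blockMax (A : Finset ℕ) : ℕ := A.sup (fun n => n)

def IsBuildingBlock (M : Set ℤ) (A : Finset ℕ) (a : ℤ → ℤ) : Prop :=
  0 ∈ A ∧ Monotone a ∧
    M = ⋃ i : ℤ, {x : ℤ | ∃ n ∈ A, x = (n : ℤ) + a i} ∧
    ∀ i : ℤ, ((blockMax A : ℤ) < a (i + 1) - a i ∨ a (i + 1) = a i)

open scoped Classical in
def IsAccc (M : Set ℤ) : Prop :=
  M = ∅ ∨ ∀ ε : ℝ, 0 < ε → ∃ k : ℕ, 0 < k ∧ ∀ N : ℕ,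
    ∃ A : Finset ℕ, ∃ a : ℤ → ℤ, ∃ D : Finset (ZMod k),
      IsBuildingBlock M A a ∧ N ≤ blockMax A ∧
      ((symmDiff ((Finset.Icc 0 (blockMax A)).filter (fun n => (n : ZMod k) ∈ D)) A).card : ℝ)
        < ε * (blockMax A : ℝ)

def KLRBody (ε : ℝ) (L₀ : ℕ) : Prop :=
  ∀ L : ℕ, L₀ ≤ L → ∀ q : ℕ, 1 ≤ q →
    (∑ p ∈ q.primeFactors, (1 : ℝ) / p) ≤
      (1 - ε) * ∑ p ∈ (Finset.range (L + 1)).filter Nat.Prime, (1 : ℝ) / p →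
    ∃ N₀ : ℕ, ∀ N : ℕ, N₀ ≤ N → ∃ z : ℕ, z < L * q ∧
      ∑ j ∈ Finset.range (N / (L * q) + 1), ∑ a ∈ Finset.range q,
        |∑ m ∈ (Finset.Ico (z + j * (L * q)) (z + (j + 1) * (L * q))).filter
            (fun m => m % q = a), (moebius m : ℝ)| ≤ ε * N

def KLR : Prop := ∀ ε : ℝ, 0 < ε → ε < 1 / 100 → ∃ L₀ : ℕ, KLRBody ε L₀

/-- If A is a building block of a nonempty M witnessed by (a_i), with a_i → ±∞,
then for every i with a_{i+1} - a_i > max A and every 0 ≤ n ≤ max A,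
n + a_i ∈ M iff n ∈ A. -/
theorem stmt_5 (M : Set ℤ) (hMne : M.Nonempty) (A : Finset ℕ) (a : ℤ → ℤ)
    (hblock : IsBuildingBlock M A a)
    (htop : Tendsto a atTop atTop) (hbot : Tendsto a atBot atBot) :
    ∀ i : ℤ, (blockMax A : ℤ) < a (i + 1) - a i →
      ∀ n : ℕ, n ≤ blockMax A → (((n : ℤ) + a i ∈ M) ↔ n ∈ A) := by
  obtain ⟨h0, hmono, hM, hgap⟩ := hblock
  -- key gap lemma
  have key : ∀ j i : ℤ, j ≤ i → a j < a i → a j + (blockMax A : ℤ) < a i := by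
    intro j
    refine fun i hji => Int.le_induction (motive := fun i _ => a j < a i → a j + (blockMax A : ℤ) < a i)
      (fun h => absurd h (lt_irrefl _)) ?_ i hji
    intro i hji ih h
    rcases hgap i with hg | hg
    · have : a j ≤ a i := hmono hji
      omega
    · rw [hg] at h ⊢
      exact ih h
  intro i hi n hn
  constructor
  · intro hmem
    rw [hM] at hmem
    simp only [Set.mem_iUnion, Set.mem_setOf_eq] at hmem
    obtain ⟨j, m, hmA, heq⟩ := hmem
    have hm : (m : ℤ) ≤ (blockMax A : ℤ) := by
      exact_mod_cast Finset.le_sup (f := fun n => n) hmA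
    rcases lt_trichotomy (a j) (a i) with h | h | h
    · have hji : j ≤ i := by
        by_contra hc
        push_neg at hc
        exact absurd (hmono hc.le) (not_le.mpr h)
      have := key j i hji h
      omega
    · have : (n : ℤ) = (m : ℤ) := by omega
      have : n = m := by exact_mod_cast this
      rwa [this]
    · have hij : i ≤ j := by
        by_contra hc
        push_neg at hc
        exact absurd (hmono hc.le) (not_le.mpr h)
      have hij' : i + 1 ≤ j := by
        rcases eq_or_lt_of_le hij with rfl | h'
        · exact absurd h (lt_irrefl _)
        · omega
      have h1 : a (i + 1) ≤ a j := hmono hij'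
      have hn' : (n : ℤ) ≤ (blockMax A : ℤ) := by exact_mod_cast hn
      omega
  · intro hnA
    rw [hM]
    simp only [Set.mem_iUnion, Set.mem_setOf_eq]
    exact ⟨i, n, hnA, rfl⟩
end

section
/- Let v_n be the generating sequence of a rank-one word in the class 𝒦_m, i.e., for each n there are natural numbers 0 ≤ t_{n,1},…,t_{n,m} ≤ m−1 with r_n divisible by m and s_{n,i} = t_{n,⌈mi/r_n⌉} for 0 < i ≤ r_n. Let A_n = {0 ≤ i < |v_n| : v_n(i) = 0}. Then max(A_n) = |v_n| − t_{n−1,m} − t_{n−2,m} − ⋯ − t_{0,m} − 1; in particular |v_n| − max(A_n) ≤ n(m−1) + 1. -/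
open Filter ArithmeticFunction

lemma rep_getD (c j : ℕ) : (List.replicate c true).getD j true = true := by
  simp [List.getD, List.getElem?_replicate]
  split <;> simp_all

lemma blockMax_split (w : List Bool) (c : ℕ) :
    blockMax ((Finset.range (w ++ false :: List.replicate c true).length).filter
      (fun i => (w ++ false :: List.replicate c true).getD i true = false)) = w.length := by
  set l := w ++ false :: List.replicate c true with hl
  have hlen : l.length = w.length + c + 1 := by simp [hl]; omega
  apply le_antisymm
  · apply Finset.sup_le
    intro i hi
    simp only [Finset.mem_filter, Finset.mem_range] at hi
    by_contra hgt
    push_neg at hgt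
    have h1 : w.length ≤ i := le_of_lt hgt
    rw [List.getD_append_right _ _ _ _ h1] at hi
    obtain ⟨j, hj⟩ : ∃ j, i - w.length = j + 1 := ⟨i - w.length - 1, by omega⟩
    rw [hj] at hi
    simp only [List.getD_cons_succ] at hi
    rw [rep_getD] at hi
    exact absurd hi.2 (by simp)
  · apply Finset.le_sup (f := fun n => n)
    simp only [Finset.mem_filter, Finset.mem_range]
    constructor
    · omega
    · rw [List.getD_append_right _ _ _ _ le_rfl]
      simp

/-- For generating sequences in the class 𝒦ₘ, the position of the last 0 in vₙ is
|vₙ| − t_{n−1,m} − ⋯ − t_{0,m} − 1; in particular |vₙ| − max Aₙ ≤ n(m−1)+1. -/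
theorem stmt_11 (m : ℕ) (hm : 2 ≤ m) (r : ℕ → ℕ) (t : ℕ → ℕ → ℕ) (s : ℕ → ℕ → ℕ)
    (v : ℕ → List Bool) (A : ℕ → Finset ℕ)
    (hr : ∀ n, 1 < r n) (hdvd : ∀ n, m ∣ r n)
    (ht : ∀ n k, 1 ≤ k → k ≤ m → t n k ≤ m - 1)
    (hs : ∀ n i, 1 ≤ i → i ≤ r n → s n i = t n ((m * i + r n - 1) / r n))
    (hv0 : v 0 = [false])
    (hrec : ∀ n, v (n + 1) =
      (List.range (r n)).flatMap (fun i => v n ++ List.replicate (s n (i + 1)) true))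
    (hA : ∀ n, A n = (Finset.range (v n).length).filter (fun i => (v n).getD i true = false)) :
    ∀ n : ℕ,
      ((blockMax (A n) : ℤ) = ((v n).length : ℤ) - (∑ j ∈ Finset.range n, (t j m : ℤ)) - 1) ∧
      (v n).length - blockMax (A n) ≤ n * (m - 1) + 1 := by
  -- structural lemma
  have key : ∀ n : ℕ, ∃ w : List Bool,
      v n = w ++ false :: List.replicate (∑ j ∈ Finset.range n, t j m) true := by
    intro n
    induction n with
    | zero => exact ⟨[], by simp [hv0]⟩
    | succ n ih =>
      obtain ⟨w, hw⟩ := ih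
      have hrn := hr n
      have hsr : s n (r n) = t n m := by
        rw [hs n (r n) (by omega) le_rfl]
        congr 1
        have h1 : m * r n + r n - 1 = r n * m + (r n - 1) := by ring_nf; omega
        rw [h1, Nat.mul_add_div (by omega), Nat.div_eq_of_lt (by omega)]
        omega
      have hrange : List.range (r n) = List.range (r n - 1) ++ [r n - 1] := by
        conv_lhs => rw [show r n = (r n - 1) + 1 by omega]
        exact List.range_succ (n := r n - 1)
      refine ⟨(List.range (r n - 1)).flatMap
          (fun i => v n ++ List.replicate (s n (i + 1)) true) ++ w, ?_⟩
      rw [hrec n, hrange, List.flatMap_append]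
      simp only [List.flatMap_cons, List.flatMap_nil, List.append_nil]
      rw [show r n - 1 + 1 = r n by omega, hsr, hw]
      rw [Finset.sum_range_succ]
      rw [List.replicate_add, List.append_assoc]
      simp
  intro n
  obtain ⟨w, hw⟩ := key n
  have hbm : blockMax (A n) = w.length := by
    rw [hA n, hw]; exact blockMax_split w _
  have hlen : (v n).length = w.length + (∑ j ∈ Finset.range n, t j m) + 1 := by
    rw [hw]; simp; omega
  have hsum : (∑ j ∈ Finset.range n, t j m) ≤ n * (m - 1) := by
    calc (∑ j ∈ Finset.range n, t j m) ≤ ∑ j ∈ Finset.range n, (m - 1) :=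
          Finset.sum_le_sum (fun j _ => ht j m (by omega) le_rfl)
      _ = n * (m - 1) := by simp [mul_comm]
  constructor
  · have : ((∑ j ∈ Finset.range n, t j m : ℕ) : ℤ) = ∑ j ∈ Finset.range n, (t j m : ℤ) := by
      push_cast; ring
    rw [hbm, hlen, ← this]; push_cast; ring
  · omega
end

section
/- Let v_n be a generating sequence of a rank-one word and for n ≥ 1 write v_{n+1} = u_{n,1}⋯u_{n,m} where u_{n,k} = (v_n 1^{t_{n,k}})^{r_n/m} (assuming r_n divisible by m and s_{n,i} = t_{n,⌈mi/r_n⌉}). Let σ_{n,ℓ} = (ℓ|v_n| + t_{n,1} + ⋯ + t_{n,ℓ})·(r_n/m) for 0 ≤ ℓ < m and σ_{n,m} = |v_{n+1}|. Let A_{n+1} be the set of positions of 0s in v_{n+1}. Then for each 0 ≤ ℓ < m, A_{n+1} is a complete congruency class mod |v_n| + t_{n,ℓ+1} on the interval [σ_{n,ℓ}, σ_{n,ℓ+1}), meaning: for every n' ∈ [σ_{n,ℓ}, σ_{n,ℓ+1} − (|v_n| + t_{n,ℓ+1})), n' ∈ A_{n+1} if and only if n' + |v_n| + t_{n,ℓ+1}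 ∈ A_{n+1}. -/
open Filter ArithmeticFunction

/-- B is a complete congruency class mod q on the interval [a,b). -/
def IsCCCNat (B : Set ℕ) (q a b : ℕ) : Prop :=
  ∀ n : ℕ, a ≤ n → n + q < b → (n ∈ B ↔ n + q ∈ B)

private lemma getD_rep {α : Type*} (u C : List α) (d : α) :
    ∀ N i, i < N * u.length →
      ((List.replicate N u).flatten ++ C).getD i d = u.getD (i % u.length) d := by
  intro N
  induction N with
  | zero => intro i hi; omega
  | succ N ih =>
    intro i hi
    rw [Nat.succ_mul] at hi
    have hrep : (List.replicate (N + 1) u).flatten = u ++ (List.replicate N u).flatten := by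
      simp [List.replicate_succ]
    rw [hrep, List.append_assoc]
    by_cases h : i < u.length
    · rw [List.getD_append _ _ _ _ h, Nat.mod_eq_of_lt h]
    · push_neg at h
      rw [List.getD_append_right _ _ _ _ h, ih (i - u.length) (by omega)]
      congr 1
      obtain ⟨j, rfl⟩ : ∃ j, i = u.length + j := ⟨i - u.length, by omega⟩
      simp [Nat.add_mod_left]

/-- On each block of a generalized-Katok word v_{n+1} = ∏ₖ (vₙ1^{tₖ})^{rₙ/m},
the set of 0-positions is a complete congruency class mod |vₙ| + t_{ℓ+1}
on [sig ℓ, sig (ℓ+1)). -/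
theorem stmt_12 (m rn : ℕ) (hm : 1 ≤ m) (hdvd : m ∣ rn) (hrn : 0 < rn)
    (v : List Bool) (hv : v ≠ []) (t : ℕ → ℕ) (w : List Bool)
    (hw : w = (List.range m).flatMap
      (fun k => (List.range (rn / m)).flatMap (fun _ => v ++ List.replicate (t (k + 1)) true)))
    (sig : ℕ → ℕ)
    (hsig : ∀ l, l < m → sig l = (l * v.length + ∑ j ∈ Finset.Icc 1 l, t j) * (rn / m))
    (hsigm : sig m = w.length) :
    ∀ l, l < m →
      IsCCCNat {i : ℕ | i < w.length ∧ w.getD i true = false}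
        (v.length + t (l + 1)) (sig l) (sig (l + 1)) := by
  intro l hl
  set N := rn / m with hN
  set g : ℕ → List Bool := fun k =>
    (List.replicate N (v ++ List.replicate (t (k + 1)) true)).flatten with hgdef
  have hw' : w = ((List.range m).map g).flatten := by
    rw [hw, List.flatMap_def]
    congr 1
    refine List.map_congr_left fun k _ => ?_
    simp [hgdef, List.flatMap_def, List.map_const']
  have hglen : ∀ k, (g k).length = N * (v.length + t (k + 1)) := by
    intro k
    simp only [hgdef, List.length_flatten, List.map_replicate, List.sum_replicate,
      List.length_append, List.length_replicate, smul_eq_mul]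
  set S : ℕ → ℕ := fun L => (L * v.length + ∑ j ∈ Finset.Icc 1 L, t j) * N with hSdef
  have hflen : ∀ L, (((List.range L).map g).flatten).length = S L := by
    intro L
    induction L with
    | zero => simp [hSdef]
    | succ L ih =>
      rw [List.range_succ, List.map_append, List.flatten_append, List.length_append, ih]
      simp only [List.map_singleton, List.flatten, List.append_eq, List.append_nil, hglen, hSdef]
      rw [Finset.sum_Icc_succ_top (by omega : 1 ≤ L + 1)]
      ring
  have hwlen : w.length = S m := by rw [hw', hflen]
  have hsl : sig l = S l := hsig l hl
  have hsl1 : sig (l + 1) = S (l + 1) := by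
    rcases Nat.lt_or_ge (l + 1) m with h | h
    · exact hsig _ h
    · have hlm : l + 1 = m := by omega
      rw [hlm, hsigm, hwlen]
  set p := v.length + t (l + 1) with hp
  have hpp : 0 < p := by
    have := List.length_pos_iff.mpr hv; omega
  have hSstep : S (l + 1) = S l + N * p := by
    simp only [hSdef, hp]
    rw [Finset.sum_Icc_succ_top (by omega : 1 ≤ l + 1)]
    ring
  have hSmono : S (l + 1) ≤ S m := by
    simp only [hSdef]
    apply Nat.mul_le_mul_right
    apply Nat.add_le_add
    · exact Nat.mul_le_mul_right _ (by omega)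
    · exact Finset.sum_le_sum_of_subset (Finset.Icc_subset_Icc_right (by omega))
  set u := v ++ List.replicate (t (l + 1)) true with hu
  have hul : u.length = p := by simp [hu, hp]
  set M := m - l - 1 with hM
  obtain ⟨C, hC⟩ : ∃ C, w = ((List.range l).map g).flatten ++
      ((List.replicate N u).flatten ++ C) := by
    refine ⟨((List.range M).map (fun x => g (l + 1 + x))).flatten, ?_⟩
    rw [hw', show m = (l + 1) + M by omega, List.range_add, List.range_succ]
    simp [List.flatten_append, List.map_map, Function.comp_def, hgdef, hu]
  have hkey : ∀ i, i < N * p →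
      w.getD (S l + i) true = u.getD (i % p) true := by
    intro i hi
    rw [hC, List.getD_append_right _ _ _ _ (by rw [hflen]; omega), hflen,
      Nat.add_sub_cancel_left]
    rw [← hul] at hi ⊢
    exact getD_rep u C true N i hi
  intro n hn hnq
  rw [hsl] at hn
  rw [hsl1, hSstep] at hnq
  obtain ⟨i, rfl⟩ : ∃ i, n = S l + i := ⟨n - S l, by omega⟩
  have h1 : w.getD (S l + i) true = u.getD (i % p) true := hkey i (by omega)
  have h2 : w.getD (S l + i + p) true = u.getD (i % p) true := by
    have h3 := hkey (i + p) (by omega)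
    rw [← Nat.add_assoc] at h3
    rw [h3, Nat.add_mod_right]
  have hlt1 : S l + i < w.length := by rw [hwlen]; omega
  have hlt2 : S l + i + p < w.length := by rw [hwlen]; omega
  simp only [Set.mem_setOf_eq]
  constructor
  · rintro ⟨-, hval⟩
    exact ⟨hlt2, by rw [h2, ← h1]; exact hval⟩
  · rintro ⟨-, hval⟩
    exact ⟨hlt1, by rw [h1, ← h2]; exact hval⟩
end

section
/- Assume the Kanigowski–Lemańczyk–Radziwiłł short-interval estimate. Let M ⊆ ℤ be a set that is a finite union M = ⋃_{ℓ=0}^{m−1} C_ℓ where each C_ℓ is a union of disjoint arithmetic progressions of common difference q_ℓ, each progression contained in an interval of length at most Λ, with the intervals containing distinct progressions of all the C_ℓ pairwise disjoint and separated, and suppose the q_ℓ and a parameter L ≥ L₀ satisfy ∑_{p|q_ℓ} 1/p ≤ (1−ε)∑_{p≤L} 1/p for each ℓ, with L·q_ℓ ≤ εΛ/2. Then limsup_{N→∞} |(1/N)∑_{n∈M,1≤n≤N} μ(n)| ≤ (m+2)ε. -/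
open Filter ArithmeticFunction

open scoped Classical

private lemma muR_abs_le_one (n : ℕ) : |(moebius n : ℝ)| ≤ 1 := by
  have h := ArithmeticFunction.abs_moebius_le_one (n := n)
  exact_mod_cast h

private lemma sum_blocks (g : ℕ → ℝ) (z w : ℕ) (T : ℕ) :
    ∑ j ∈ Finset.range T, ∑ n ∈ Finset.Ico (z + j * w) (z + (j + 1) * w), g n
      = ∑ n ∈ Finset.Ico z (z + T * w), g n := by
  induction T with
  | zero => simp
  | succ T ih =>
    rw [Finset.sum_range_succ, ih,
      ← Finset.sum_Ico_consecutive g (Nat.le_add_right z (T * w))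
        (Nat.add_le_add_left (Nat.mul_le_mul_right w (Nat.le_succ T)) z)]

private lemma window_est (m : ℕ) (b : Fin m → ℤ → ℤ) (Lam W N : ℕ) (hΛ : 0 < Lam)
    (hsep : ∀ (l : Fin m) (j : ℤ) (l' : Fin m) (j' : ℤ), (l, j) ≠ (l', j') →
      b l j + (Lam : ℤ) ≤ b l' j' ∨ b l' j' + (Lam : ℤ) ≤ b l j) :
    ∃ tF : Finset (Fin m × ℤ),
      (∀ p : Fin m × ℤ, p ∈ tF ↔ ∃ c : ℤ, b p.1 p.2 ≤ c ∧ c < b p.1 p.2 + Lam ∧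
          0 ≤ c ∧ c < (N : ℤ) + 2 * W) ∧
      (Lam : ℤ) * tF.card ≤ (N : ℤ) + 2 * W + 2 * Lam := by
  classical
  have hΛZ : (0 : ℤ) < (Lam : ℤ) := by exact_mod_cast hΛ
  set f : Fin m × ℤ → ℤ := fun p => b p.1 p.2 / (Lam : ℤ) with hfdef
  set tset : Set (Fin m × ℤ) := {p | ∃ c : ℤ, b p.1 p.2 ≤ c ∧ c < b p.1 p.2 + Lam ∧
      0 ≤ c ∧ c < (N : ℤ) + 2 * W} with htsetdef
  have hmono : ∀ p ∈ tset, ∀ p' ∈ tset, p ≠ p' → f p ≠ f p' := by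
    rintro ⟨l, i⟩ hp ⟨l', i'⟩ hp' hne heq
    have key : ∀ x y : ℤ, x + Lam ≤ y → x / (Lam : ℤ) < y / (Lam : ℤ) := by
      intro x y hxy
      have h1 : x / (Lam : ℤ) + 1 = (x + 1 * Lam) / Lam :=
        (Int.add_mul_ediv_right x 1 (ne_of_gt hΛZ)).symm
      have h2 : (x + 1 * Lam) / Lam ≤ y / Lam := Int.ediv_le_ediv hΛZ (by linarith)
      omega
    rcases hsep l i l' i' hne with h | h
    · exact absurd heq (ne_of_lt (key _ _ h))
    · exact absurd heq.symm (ne_of_lt (key _ _ h))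
  have himg : ∀ p ∈ tset, f p ∈ Finset.Icc (-1 : ℤ) (((N : ℤ) + 2 * W) / Lam) := by
    rintro ⟨l, i⟩ ⟨c, hc1, hc2, hc3, hc4⟩
    simp only [Finset.mem_Icc]
    constructor
    · have h1 : (-1) * (Lam : ℤ) ≤ b l i := by linarith
      have h2 := Int.ediv_le_ediv hΛZ h1
      rwa [Int.mul_ediv_cancel _ (ne_of_gt hΛZ)] at h2
    · exact Int.ediv_le_ediv hΛZ (by linarith)
  have hinj : Set.InjOn f tset := by
    intro p hp p' hp' h
    by_contra hne
    exact hmono p hp p' hp' hne h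
  have hfin : tset.Finite := by
    refine Set.Finite.of_finite_image ?_ hinj
    refine Set.Finite.subset (Finset.Icc (-1 : ℤ) (((N : ℤ) + 2 * W) / Lam)).finite_toSet ?_
    rintro y ⟨p, hp, rfl⟩
    exact himg p hp
  refine ⟨hfin.toFinset, fun p => hfin.mem_toFinset, ?_⟩
  have hcard : hfin.toFinset.card ≤ (Finset.Icc (-1 : ℤ) (((N : ℤ) + 2 * W) / Lam)).card := by
    apply Finset.card_le_card_of_injOn f
    · intro p hp
      exact himg p (hfin.mem_toFinset.1 hp)
    · intro p hp p' hp' h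
      exact hinj (hfin.mem_toFinset.1 hp) (hfin.mem_toFinset.1 hp') h
  have hIcc : (Finset.Icc (-1 : ℤ) (((N : ℤ) + 2 * W) / Lam)).card
      = ((((N : ℤ) + 2 * W) / Lam) + 2).toNat := by
    rw [Int.card_Icc]
    congr 1
  have hdivnn : (0:ℤ) ≤ ((N : ℤ) + 2 * W) / Lam := Int.ediv_nonneg (by positivity) hΛZ.le
  have h1 : (hfin.toFinset.card : ℤ) ≤ ((N : ℤ) + 2 * W) / Lam + 2 := by
    rw [hIcc] at hcard
    omega
  have h2 := Int.mul_ediv_add_emod ((N : ℤ) + 2 * W) (Lam : ℤ)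
  have h3 := Int.emod_nonneg ((N : ℤ) + 2 * W) (ne_of_gt hΛZ)
  nlinarith [h1, h2, h3]

set_option maxHeartbeats 2000000 in
private lemma klr_perl
    (ε : ℝ) (hε0 : 0 < ε)
    (L m : ℕ) (q : Fin m → ℕ) (b : Fin m → ℤ → ℤ) (len : Fin m → ℤ → ℕ) (Lam W N : ℕ)
    (hq : ∀ l, 1 ≤ q l) (hΛ : 0 < Lam)
    (hprog : ∀ l j, len l j * q l ≤ Lam)
    (hsep : ∀ (l : Fin m) (j : ℤ) (l' : Fin m) (j' : ℤ), (l, j) ≠ (l', j') →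
      b l j + (Lam : ℤ) ≤ b l' j' ∨ b l' j' + (Lam : ℤ) ≤ b l j)
    (l : Fin m)
    (hw0 : 0 < L * q l)
    (hwW : L * q l ≤ W)
    (P : Fin m → ℤ → Set ℤ)
    (hPdef : P = fun l i => {x : ℤ | ∃ k : ℕ, k < len l i ∧ x = b l i + (k : ℤ) * (q l : ℤ)})
    (hPmem : ∀ l i x, x ∈ P l i → b l i ≤ x ∧ x < b l i + Lam ∧ 1 ≤ len l i)
    (tF : Finset (Fin m × ℤ))
    (htFmem : ∀ p : Fin m × ℤ, p ∈ tF ↔ ∃ c : ℤ, b p.1 p.2 ≤ c ∧ c < b p.1 p.2 + Lam ∧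
      0 ≤ c ∧ c < (N : ℤ) + 2 * W)
    (z : ℕ) (hz : z < L * q l)
    (hKsum : ∑ j ∈ Finset.range (N / (L * q l) + 1), ∑ a ∈ Finset.range (q l),
        |∑ mm ∈ (Finset.Ico (z + j * (L * q l)) (z + (j + 1) * (L * q l))).filter
            (fun mm => mm % q l = a), (moebius mm : ℝ)| ≤ ε * N) :
    |∑ n ∈ Finset.Icc 1 N, if (n : ℤ) ∈ ⋃ i : ℤ, P l i then (moebius n : ℝ) else 0|
      ≤ ε * N + 3 * ((L * q l : ℕ) : ℝ)
        + ((L * q l : ℕ) : ℝ) * (2 * ((tF.filter (fun p => p.1 = l)).card : ℝ)) := by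
  classical
  set w := L * q l with hwdef
  set T := N / w + 1 with hTdef
  set B : ℕ → Finset ℕ := fun j => Finset.Ico (z + j * w) (z + (j + 1) * w) with hBdef
  set g : ℕ → ℝ := fun n => if (n : ℤ) ∈ ⋃ i : ℤ, P l i then (moebius n : ℝ) else 0 with hgdef
  have hgabs : ∀ n, |g n| ≤ 1 := by
    intro n
    rw [hgdef]
    dsimp only
    split
    · exact muR_abs_le_one n
    · simp
  have habs : ∀ s : Finset ℕ, |∑ n ∈ s, g n| ≤ (s.card : ℝ) := by
    intro s
    refine (Finset.abs_sum_le_sum_abs _ _).trans ?_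
    calc ∑ n ∈ s, |g n| ≤ ∑ n ∈ s, 1 := Finset.sum_le_sum fun n _ => hgabs n
      _ = (s.card : ℝ) := by simp
  -- window facts
  have hN1 : N < T * w := by
    have h1 : N / w < T := Nat.lt_succ_self _
    exact (Nat.div_lt_iff_lt_mul hw0).1 h1
  have hN2 : z + T * w ≤ N + 2 * w := by
    have h1 : N / w * w ≤ N := Nat.div_mul_le_self N w
    have h2 : T * w = N / w * w + w := by rw [hTdef]; ring
    omega
  -- step A: compare Icc 1 N with the block window
  have hstepA : |∑ n ∈ Finset.Icc 1 N, g n| ≤ |∑ n ∈ Finset.Ico z (z + T * w), g n|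
      + 3 * (w : ℝ) := by
    set A := Finset.Icc 1 N with hA
    set Bb := Finset.Ico z (z + T * w) with hBb
    have e1 : ∑ n ∈ A, g n = ∑ n ∈ A ∩ Bb, g n + ∑ n ∈ A \ Bb, g n :=
      (Finset.sum_inter_add_sum_sdiff A Bb g).symm
    have e2 : ∑ n ∈ Bb, g n = ∑ n ∈ A ∩ Bb, g n + ∑ n ∈ Bb \ A, g n := by
      rw [Finset.inter_comm]
      exact (Finset.sum_inter_add_sum_sdiff Bb A g).symm
    have hc1 : ((A \ Bb).card : ℝ) ≤ (w : ℝ) := by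
      have hsub : A \ Bb ⊆ Finset.range z := by
        intro n hn
        simp only [hA, hBb, Finset.mem_sdiff, Finset.mem_Icc, Finset.mem_Ico,
          Finset.mem_range, not_and, not_lt] at hn ⊢
        omega
      have := Finset.card_le_card hsub
      rw [Finset.card_range] at this
      exact_mod_cast this.trans (le_of_lt hz)
    have hc2 : ((Bb \ A).card : ℝ) ≤ 2 * (w : ℝ) := by
      have hsub : Bb \ A ⊆ Finset.range 1 ∪ Finset.Ico (N + 1) (z + T * w) := by
        intro n hn
        simp only [hBb, hA, Finset.mem_sdiff, Finset.mem_Ico, Finset.mem_Icc,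
          Finset.mem_union, Finset.mem_range, not_and, not_le] at hn ⊢
        omega
      have h1 := Finset.card_le_card hsub
      have h2 := Finset.card_union_le (Finset.range 1) (Finset.Ico (N + 1) (z + T * w))
      rw [Finset.card_range, Nat.card_Ico] at h2
      have h3 : (Bb \ A).card ≤ 2 * w := by omega
      exact_mod_cast h3
    have d1 := (habs (A \ Bb)).trans hc1
    have d2 := (habs (Bb \ A)).trans hc2
    have ha1 : |∑ n ∈ A \ Bb, g n| ≤ (w : ℝ) := d1
    calc |∑ n ∈ A, g n|
        = |∑ n ∈ Bb, g n + (∑ n ∈ A \ Bb, g n - ∑ n ∈ Bb \ A, g n)| := by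
          rw [e1, e2]; ring_nf
      _ ≤ |∑ n ∈ Bb, g n| + |∑ n ∈ A \ Bb, g n - ∑ n ∈ Bb \ A, g n| := abs_add_le _ _
      _ ≤ |∑ n ∈ Bb, g n| + (|∑ n ∈ A \ Bb, g n| + |∑ n ∈ Bb \ A, g n|) := by
          have := abs_sub (∑ n ∈ A \ Bb, g n) (∑ n ∈ Bb \ A, g n)
          linarith
      _ ≤ |∑ n ∈ Bb, g n| + 3 * (w : ℝ) := by linarith
  -- good/bad blocks
  set Good : ℕ → Prop := fun j => (∀ n ∈ B j, (n : ℤ) ∉ ⋃ i : ℤ, P l i) ∨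
      ∃ i : ℤ, b l i ≤ ((z + j * w : ℕ) : ℤ) ∧
        ((z + (j + 1) * w : ℕ) : ℤ) ≤ b l i + (len l i : ℤ) * (q l : ℤ) with hGooddef
  set K : ℕ → ℝ := fun j => ∑ a ∈ Finset.range (q l),
      |∑ mm ∈ (B j).filter (fun mm => mm % q l = a), (moebius mm : ℝ)| with hKdef
  have hK0 : ∀ j, 0 ≤ K j := fun j => Finset.sum_nonneg fun a _ => abs_nonneg _
  have hblock : ∀ j, |∑ n ∈ B j, g n| ≤ K j + (if Good j then 0 else (w : ℝ)) := by
    intro j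
    by_cases hGj : Good j
    · rw [if_pos hGj, add_zero]
      rcases hGj with hemp | ⟨i, h1, h2⟩
      · have hzero : ∑ n ∈ B j, g n = 0 := Finset.sum_eq_zero fun n hn => by
          rw [hgdef]; dsimp only; rw [if_neg (hemp n hn)]
        rw [hzero, abs_zero]; exact hK0 j
      · have hq0 : (0 : ℤ) < (q l : ℤ) := by exact_mod_cast hq l
        set a0 : ℕ := ((b l i) % (q l : ℤ)).toNat with ha0def
        have hbm1 : 0 ≤ (b l i) % (q l : ℤ) := Int.emod_nonneg _ (ne_of_gt hq0)
        have hbm2 : (b l i) % (q l : ℤ) < (q l : ℤ) := Int.emod_lt_of_pos _ hq0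
        have ha0 : a0 ∈ Finset.range (q l) := by rw [Finset.mem_range]; omega
        have hiff : ∀ n ∈ B j, ((n : ℤ) ∈ ⋃ i' : ℤ, P l i') ↔ n % q l = a0 := by
          intro n hn
          have hn1 : z + j * w ≤ n ∧ n < z + (j + 1) * w := by
            simpa [hBdef, Finset.mem_Ico] using hn
          have hcast : ((n % q l : ℕ) : ℤ) = (n : ℤ) % (q l : ℤ) := by push_cast; ring
          constructor
          · intro hmem
            rw [Set.mem_iUnion] at hmem
            obtain ⟨i', hi'⟩ := hmem
            by_cases hii : i' = i
            · subst hii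
              have hi2 := hi'
              rw [hPdef] at hi2
              obtain ⟨k, hk, hx⟩ := hi2
              have h3 : (n : ℤ) % (q l : ℤ) = b l i' % (q l : ℤ) := by
                rw [hx]; exact Int.add_mul_emod_self_right _ _ _
              omega
            · exfalso
              have hmem2 := hPmem l i' _ hi'
              have hlow : ((z + j * w : ℕ) : ℤ) ≤ (n : ℤ) := by exact_mod_cast hn1.1
              have hhigh : (n : ℤ) < ((z + (j + 1) * w : ℕ) : ℤ) := by exact_mod_cast hn1.2
              have hpr : ((len l i : ℤ)) * (q l : ℤ) ≤ (Lam : ℤ) := by exact_mod_cast hprog l i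
              rcases hsep l i l i' (fun hcc => hii (congrArg Prod.snd hcc).symm) with hs | hs <;>
                linarith
          · intro hmod
            rw [Set.mem_iUnion]
            refine ⟨i, ?_⟩
            rw [hPdef]
            have h3 : (n : ℤ) % (q l : ℤ) = b l i % (q l : ℤ) := by omega
            have hdvd : (q l : ℤ) ∣ (n : ℤ) - b l i :=
              Int.dvd_of_emod_eq_zero (Int.emod_eq_emod_iff_emod_sub_eq_zero.mp h3)
            obtain ⟨t, ht⟩ := hdvd
            have hlow : b l i ≤ (n : ℤ) := le_trans h1 (by exact_mod_cast hn1.1)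
            have hhigh : (n : ℤ) < b l i + (len l i : ℤ) * (q l : ℤ) :=
              lt_of_lt_of_le (by exact_mod_cast hn1.2) h2
            have ht0 : 0 ≤ t := by nlinarith
            refine ⟨t.toNat, ?_, ?_⟩
            · have htl : t < (len l i : ℤ) := by nlinarith
              omega
            · have htn : ((t.toNat : ℤ)) = t := Int.toNat_of_nonneg ht0
              rw [htn]
              linarith
        have heq : ∑ n ∈ B j, g n
            = ∑ mm ∈ (B j).filter (fun mm => mm % q l = a0), (moebius mm : ℝ) := by
          rw [Finset.sum_filter]
          refine Finset.sum_congr rfl fun n hn => ?_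
          rw [hgdef]; dsimp only
          by_cases hc : n % q l = a0
          · rw [if_pos hc, if_pos ((hiff n hn).2 hc)]
          · rw [if_neg hc, if_neg fun hcc => hc ((hiff n hn).1 hcc)]
        rw [heq]
        have := Finset.single_le_sum
          (f := fun a => |∑ mm ∈ (B j).filter (fun mm => mm % q l = a), (moebius mm : ℝ)|)
          (fun a _ => abs_nonneg _) ha0
        simpa [hKdef] using this
    · rw [if_neg hGj]
      have h1 := habs (B j)
      have h2 : (B j).card = w := by
        rw [hBdef]; dsimp only; rw [Nat.card_Ico]
        have : (j + 1) * w = j * w + w := by ring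
        omega
      rw [h2] at h1
      linarith [hK0 j]
  set badF := (Finset.range T).filter (fun j => ¬ Good j) with hbadFdef
  have hsum_ite : ∑ j ∈ Finset.range T, (if Good j then (0 : ℝ) else (w : ℝ))
      = (w : ℝ) * badF.card := by
    rw [Finset.sum_ite, Finset.sum_const, Finset.sum_const]
    simp [hbadFdef, mul_comm]
  have hbadcard : badF.card ≤ 2 * (tF.filter (fun p => p.1 = l)).card := by
    have hq0 : (0 : ℤ) < (q l : ℤ) := by exact_mod_cast hq l
    set pt : ℤ × Bool → ℤ := fun p =>
      if p.2 then b l p.1 + (len l p.1 : ℤ) * (q l : ℤ) - 1 else b l p.1 with hptdef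
    have hex : ∀ j ∈ badF, ∃ p : ℤ × Bool, (l, p.1) ∈ tF ∧
        ((z + j * w : ℕ) : ℤ) ≤ pt p ∧ pt p < ((z + (j + 1) * w : ℕ) : ℤ) := by
      intro j hj
      rw [hbadFdef, Finset.mem_filter, Finset.mem_range] at hj
      obtain ⟨hjT, hbad⟩ := hj
      simp only [hGooddef] at hbad
      push_neg at hbad
      obtain ⟨⟨n, hnB, hnM⟩, hnc⟩ := hbad
      rw [Set.mem_iUnion] at hnM
      obtain ⟨i, hi⟩ := hnM
      have hPm := hPmem l i _ hi
      have hi2 := hi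
      rw [hPdef] at hi2
      obtain ⟨k, hk, hx⟩ := hi2
      have hn1 : z + j * w ≤ n ∧ n < z + (j + 1) * w := by
        simpa [hBdef, Finset.mem_Ico] using hnB
      have hlow : ((z + j * w : ℕ) : ℤ) ≤ (n : ℤ) := by exact_mod_cast hn1.1
      have hhigh : (n : ℤ) < ((z + (j + 1) * w : ℕ) : ℤ) := by exact_mod_cast hn1.2
      have hup : ((z + (j + 1) * w : ℕ) : ℤ) ≤ (N : ℤ) + 2 * W := by
        have hj1 : j + 1 ≤ T := hjT
        have h4 : (j + 1) * w ≤ T * w := Nat.mul_le_mul_right w hj1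
        have h6 : z + (j + 1) * w ≤ N + 2 * W := by omega
        exact_mod_cast h6
      have hlow0 : (0 : ℤ) ≤ ((z + j * w : ℕ) : ℤ) := by positivity
      have hprZ : ((len l i : ℤ)) * (q l : ℤ) ≤ (Lam : ℤ) := by exact_mod_cast hprog l i
      have hq1 : (1 : ℤ) ≤ (q l : ℤ) := by exact_mod_cast hq l
      have hk1 : (k : ℤ) + 1 ≤ (len l i : ℤ) := by exact_mod_cast hk
      have hlen1 : (1 : ℤ) ≤ (len l i : ℤ) := by exact_mod_cast hPm.2.2
      have hLam1 : (1 : ℤ) ≤ (Lam : ℤ) := by exact_mod_cast hΛ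
      have hnn : (0 : ℤ) ≤ (n : ℤ) := by positivity
      by_cases hcase : b l i ≤ ((z + j * w : ℕ) : ℤ)
      · have hend := hnc i hcase
        have hcn : (n : ℤ) ≤ b l i + (len l i : ℤ) * (q l : ℤ) - 1 := by nlinarith
        refine ⟨(i, true), ?_, ?_, ?_⟩
        · rw [htFmem]
          exact ⟨b l i + (len l i : ℤ) * (q l : ℤ) - 1,
            by nlinarith, by linarith, by linarith, by linarith⟩
        · rw [hptdef]; dsimp only; rw [if_pos rfl]; linarith
        · rw [hptdef]; dsimp only; rw [if_pos rfl]; linarith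
      · push_neg at hcase
        refine ⟨(i, false), ?_, ?_, ?_⟩
        · rw [htFmem]
          exact ⟨b l i, le_refl _, by linarith, by linarith, by linarith [hPm.1]⟩
        · rw [hptdef]; dsimp only; rw [if_neg (by simp)]; linarith
        · rw [hptdef]; dsimp only; rw [if_neg (by simp)]; linarith [hPm.1]
    set phi : ℕ → ℤ × Bool := fun j =>
      if h : ∃ p : ℤ × Bool, (l, p.1) ∈ tF ∧
          ((z + j * w : ℕ) : ℤ) ≤ pt p ∧ pt p < ((z + (j + 1) * w : ℕ) : ℤ)
      then h.choose else (0, false) with hphidef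
    have hspec : ∀ j ∈ badF, (l, (phi j).1) ∈ tF ∧
        ((z + j * w : ℕ) : ℤ) ≤ pt (phi j) ∧ pt (phi j) < ((z + (j + 1) * w : ℕ) : ℤ) := by
      intro j hj
      have h := hex j hj
      rw [hphidef]; dsimp only; rw [dif_pos h]
      exact h.choose_spec
    have hcard2 : badF.card ≤
        (((tF.filter (fun p => p.1 = l)).image Prod.snd) ×ˢ (Finset.univ : Finset Bool)).card := by
      apply Finset.card_le_card_of_injOn phi
      · intro j hj
        obtain ⟨hmem, -, -⟩ := hspec j hj
        rw [Finset.mem_coe, Finset.mem_product]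
        exact ⟨Finset.mem_image.2 ⟨(l, (phi j).1), Finset.mem_filter.2 ⟨hmem, rfl⟩, rfl⟩,
          Finset.mem_univ _⟩
      · intro j hj j' hj' hjj
        obtain ⟨-, h1, h2⟩ := hspec j hj
        obtain ⟨-, h1', h2'⟩ := hspec j' hj'
        rw [hjj] at h1 h2
        have hwZ : (0 : ℤ) < (w : ℤ) := by exact_mod_cast hw0
        push_cast at h1 h2 h1' h2'
        have ha : (j : ℤ) < (j' : ℤ) + 1 := by
          have h3 : (j : ℤ) * w < ((j' : ℤ) + 1) * w := by linarith
          exact lt_of_mul_lt_mul_right h3 (le_of_lt hwZ)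
        have hb2 : (j' : ℤ) < (j : ℤ) + 1 := by
          have h3 : (j' : ℤ) * w < ((j : ℤ) + 1) * w := by linarith
          exact lt_of_mul_lt_mul_right h3 (le_of_lt hwZ)
        omega
    have hcard3 :
        (((tF.filter (fun p => p.1 = l)).image Prod.snd) ×ˢ (Finset.univ : Finset Bool)).card
          ≤ 2 * (tF.filter (fun p => p.1 = l)).card := by
      rw [Finset.card_product, Finset.card_univ, Fintype.card_bool]
      have := Finset.card_image_le (s := tF.filter (fun p => p.1 = l)) (f := Prod.snd)
      omega
    exact hcard2.trans hcard3
  -- assemble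
  have hKsum' : ∑ j ∈ Finset.range T, K j ≤ ε * N := hKsum
  have hfinal : |∑ n ∈ Finset.Ico z (z + T * w), g n|
      ≤ ε * N + (w : ℝ) * badF.card := by
    rw [← sum_blocks g z w T]
    refine (Finset.abs_sum_le_sum_abs _ _).trans ?_
    have h1 : ∑ j ∈ Finset.range T, |∑ n ∈ B j, g n|
        ≤ ∑ j ∈ Finset.range T, (K j + (if Good j then 0 else (w : ℝ))) :=
      Finset.sum_le_sum fun j _ => hblock j
    rw [Finset.sum_add_distrib, hsum_ite] at h1
    have h2 : ∑ j ∈ Finset.range T, ∑ n ∈ Finset.Ico (z + j * w) (z + (j + 1) * w), g n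
        = ∑ j ∈ Finset.range T, ∑ n ∈ B j, g n := rfl
    calc ∑ j ∈ Finset.range T, |∑ n ∈ Finset.Ico (z + j * w) (z + (j + 1) * w), g n|
        = ∑ j ∈ Finset.range T, |∑ n ∈ B j, g n| := rfl
      _ ≤ ∑ j ∈ Finset.range T, K j + (w : ℝ) * badF.card := h1
      _ ≤ ε * N + (w : ℝ) * badF.card := by linarith
  have hbadR : ((badF.card : ℝ)) ≤ 2 * ((tF.filter (fun p => p.1 = l)).card : ℝ) := by
    exact_mod_cast hbadcard
  have hwnn : (0 : ℝ) ≤ (w : ℝ) := by positivity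
  calc |∑ n ∈ Finset.Icc 1 N, if (n : ℤ) ∈ ⋃ i : ℤ, P l i then (moebius n : ℝ) else 0|
      = |∑ n ∈ Finset.Icc 1 N, g n| := rfl
    _ ≤ |∑ n ∈ Finset.Ico z (z + T * w), g n| + 3 * (w : ℝ) := hstepA
    _ ≤ ε * N + (w : ℝ) * badF.card + 3 * (w : ℝ) := by linarith
    _ ≤ ε * N + 3 * ((L * q l : ℕ) : ℝ)
        + ((L * q l : ℕ) : ℝ) * (2 * ((tF.filter (fun p => p.1 = l)).card : ℝ)) := by
      have : (w : ℝ) * (badF.card : ℝ) ≤ (w : ℝ) * (2 * ((tF.filter (fun p => p.1 = l)).card : ℝ)) :=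
        mul_le_mul_of_nonneg_left hbadR hwnn
      rw [hwdef] at *
      push_cast at *
      linarith

set_option maxHeartbeats 4000000 in
/-- Abstract core estimate of Theorem 3.1: if M is a finite union of families of
arithmetic progressions with m common differences q_ℓ, each progression lying in
an interval of length Lam, the intervals pairwise disjoint and Lam-separated, and the
KLR estimate applies to each q_ℓ with a common L satisfying L·q_ℓ ≤ εLam/2, then
the averaged Möbius sum over M has limsup at most (m+2)ε. -/
theorem stmt_19 (ε : ℝ) (hε0 : 0 < ε) (hε1 : ε < 1 / 100)
    (L₀ : ℕ) (hKLR : KLRBody ε L₀) (L : ℕ) (hL : L₀ ≤ L)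
    (m : ℕ) (q : Fin m → ℕ) (b : Fin m → ℤ → ℤ) (len : Fin m → ℤ → ℕ) (Lam : ℕ)
    (hq : ∀ l, 1 ≤ q l)
    (hprog : ∀ l j, len l j * q l ≤ Lam)
    (hsep : ∀ l j l' j', (l, j) ≠ (l', j') →
      b l j + (Lam : ℤ) ≤ b l' j' ∨ b l' j' + (Lam : ℤ) ≤ b l j)
    (hprime : ∀ l, (∑ p ∈ (q l).primeFactors, (1 : ℝ) / p) ≤
      (1 - ε) * ∑ p ∈ (Finset.range (L + 1)).filter Nat.Prime, (1 : ℝ) / p)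
    (hLq : ∀ l, ((L * q l : ℕ) : ℝ) ≤ ε * Lam / 2)
    (M : Set ℤ)
    (hM : M = ⋃ l : Fin m, ⋃ j : ℤ,
      {x : ℤ | ∃ k : ℕ, k < len l j ∧ x = b l j + (k : ℤ) * (q l : ℤ)}) :
    limsup (fun N : ℕ => |mobiusSum M N|) atTop ≤ (m + 2) * ε := by
  classical
  rcases Nat.eq_zero_or_pos m with hm | hm
  · subst hm
    have hMe : M = ∅ := by rw [hM]; simp
    have h0 : (fun N : ℕ => |mobiusSum M N|) = fun _ => (0 : ℝ) := by
      funext N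
      have : mobiusSum M N = 0 := by
        unfold mobiusSum; rw [hMe]; simp
      rw [this, abs_zero]
    rw [h0, limsup_const]
    nlinarith
  -- main case
  set l₀ : Fin m := ⟨0, hm⟩ with hl₀
  have hw : ∀ l : Fin m, 0 < L * q l := by
    intro l
    by_contra h
    push_neg at h
    obtain ⟨N₀, hN₀⟩ := hKLR L hL (q l) (hq l) (hprime l)
    obtain ⟨zz, hzz, -⟩ := hN₀ N₀ le_rfl
    omega
  have hΛ1 : (1 : ℝ) ≤ ε * Lam / 2 := by
    have h1 : (1 : ℝ) ≤ ((L * q l₀ : ℕ) : ℝ) := by exact_mod_cast hw l₀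
    exact h1.trans (hLq l₀)
  have hΛ : 0 < Lam := by
    by_contra h
    push_neg at h
    have h0 : Lam = 0 := by omega
    rw [h0] at hΛ1
    norm_num at hΛ1
  choose N₀ hN₀ using fun l : Fin m => hKLR L hL (q l) (hq l) (hprime l)
  set W : ℕ := Finset.univ.sup (fun l : Fin m => L * q l) with hWdef
  set P : Fin m → ℤ → Set ℤ :=
    fun l i => {x : ℤ | ∃ k : ℕ, k < len l i ∧ x = b l i + (k : ℤ) * (q l : ℤ)} with hPdef
  have hMl : M = ⋃ l : Fin m, ⋃ i : ℤ, P l i := hM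
  have hPmem : ∀ l i x, x ∈ P l i → b l i ≤ x ∧ x < b l i + Lam ∧ 1 ≤ len l i := by
    rintro l i x ⟨k, hk, rfl⟩
    have hq' : (1 : ℤ) ≤ (q l : ℤ) := by exact_mod_cast hq l
    have hpr : ((len l i : ℤ)) * (q l : ℤ) ≤ (Lam : ℤ) := by exact_mod_cast hprog l i
    have hk' : (k : ℤ) + 1 ≤ (len l i : ℤ) := by exact_mod_cast hk
    refine ⟨by nlinarith, by nlinarith, by omega⟩
  have hPdisj : ∀ (l : Fin m) (i : ℤ) (l' : Fin m) (i' : ℤ),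
      ((l, i) : Fin m × ℤ) ≠ (l', i') → ∀ x, x ∈ P l i → x ∈ P l' i' → False := by
    intro l i l' i' hne x h1 h2
    obtain ⟨a1, b1, -⟩ := hPmem l i x h1
    obtain ⟨a2, b2, -⟩ := hPmem l' i' x h2
    rcases hsep l i l' i' hne with h | h <;> linarith
  have hsplit : ∀ n : ℕ, (if (n : ℤ) ∈ M then (moebius n : ℝ) else 0)
      = ∑ l : Fin m, (if (n : ℤ) ∈ ⋃ i : ℤ, P l i then (moebius n : ℝ) else 0) := by
    intro n
    by_cases hn : (n : ℤ) ∈ M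
    · rw [if_pos hn]
      rw [hMl, Set.mem_iUnion] at hn
      obtain ⟨l₁, hl₁⟩ := hn
      rw [Finset.sum_eq_single_of_mem l₁ (Finset.mem_univ l₁)]
      · rw [if_pos hl₁]
      · intro l' _ hne
        rw [if_neg]
        intro hc
        rw [Set.mem_iUnion] at hc hl₁
        obtain ⟨i', hi'⟩ := hc
        obtain ⟨i₁, hi₁⟩ := hl₁
        exact hPdisj l' i' l₁ i₁ (by simp [hne]) _ hi' hi₁
    · rw [if_neg hn]
      symm
      refine Finset.sum_eq_zero fun l _ => ?_
      rw [if_neg]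
      intro hc
      exact hn (hMl ▸ Set.mem_iUnion.2 ⟨l, hc⟩)
  set Nmax := Finset.univ.sup N₀ with hNmax
  set Cw : ℝ := ∑ l : Fin m, 3 * ((L * q l : ℕ) : ℝ) with hCw
  set C : ℝ := Cw + ε * (2 * W + 2 * Lam) with hCdef
  have hC0 : 0 ≤ C := by
    rw [hCdef, hCw]
    have : (0 : ℝ) ≤ ∑ l : Fin m, 3 * ((L * q l : ℕ) : ℝ) :=
      Finset.sum_nonneg fun l _ => by positivity
    positivity
  have hmain : ∀ N : ℕ, Nmax ≤ N →
      |∑ n ∈ Finset.Icc 1 N, if (n : ℤ) ∈ M then (moebius n : ℝ) else 0|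
        ≤ ((m : ℝ) + 1) * ε * N + C := by
    intro N hN
    obtain ⟨tF, htFmem, htFcard⟩ := window_est m b Lam W N hΛ hsep
    have hperl : ∀ l : Fin m,
        |∑ n ∈ Finset.Icc 1 N, if (n : ℤ) ∈ ⋃ i : ℤ, P l i then (moebius n : ℝ) else 0|
          ≤ ε * N + 3 * ((L * q l : ℕ) : ℝ)
            + ((L * q l : ℕ) : ℝ) * (2 * ((tF.filter (fun p => p.1 = l)).card : ℝ)) := by
      intro l
      have hNl : N₀ l ≤ N := le_trans (by rw [hNmax]; exact Finset.le_sup (f := N₀) (Finset.mem_univ l)) hN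
      obtain ⟨z, hz, hKsum⟩ := hN₀ l N hNl
      have hwW : L * q l ≤ W := by rw [hWdef]; exact Finset.le_sup (f := fun l : Fin m => L * q l) (Finset.mem_univ l)
      exact klr_perl ε hε0 L m q b len Lam W N hq hΛ hprog hsep l (hw l) hwW P hPdef hPmem
        tF htFmem z hz hKsum
    have hfib : (tF.card : ℝ) = ∑ l : Fin m, ((tF.filter (fun p => p.1 = l)).card : ℝ) := by
      have h := Finset.card_eq_sum_card_fiberwise
        (f := Prod.fst) (s := tF) (t := (Finset.univ : Finset (Fin m)))
        (fun x _ => Finset.mem_univ _)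
      exact_mod_cast h
    have e0 : ∑ n ∈ Finset.Icc 1 N, (if (n : ℤ) ∈ M then (moebius n : ℝ) else 0)
        = ∑ l : Fin m, ∑ n ∈ Finset.Icc 1 N,
            (if (n : ℤ) ∈ ⋃ i : ℤ, P l i then (moebius n : ℝ) else 0) := by
      rw [Finset.sum_congr rfl fun n _ => hsplit n]
      exact Finset.sum_comm
    have h5 : ∑ l : Fin m, ((L * q l : ℕ) : ℝ) * (2 * ((tF.filter (fun p => p.1 = l)).card : ℝ))
        ≤ ε * ((N : ℝ) + 2 * W + 2 * Lam) := by
      have h6 : ∀ l : Fin m, ((L * q l : ℕ) : ℝ) * (2 * ((tF.filter (fun p => p.1 = l)).card : ℝ))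
          ≤ (ε * Lam) * ((tF.filter (fun p => p.1 = l)).card : ℝ) := by
        intro l
        have h7 := hLq l
        have h8 : (0 : ℝ) ≤ ((tF.filter (fun p => p.1 = l)).card : ℝ) := by positivity
        nlinarith
      calc ∑ l : Fin m, ((L * q l : ℕ) : ℝ) * (2 * ((tF.filter (fun p => p.1 = l)).card : ℝ))
          ≤ ∑ l : Fin m, (ε * Lam) * ((tF.filter (fun p => p.1 = l)).card : ℝ) :=
            Finset.sum_le_sum fun l _ => h6 l
        _ = (ε * Lam) * (tF.card : ℝ) := by rw [← Finset.mul_sum, ← hfib]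
        _ ≤ ε * ((N : ℝ) + 2 * W + 2 * Lam) := by
            have hcast : (Lam : ℝ) * (tF.card : ℝ) ≤ (N : ℝ) + 2 * W + 2 * Lam := by
              exact_mod_cast htFcard
            nlinarith [hε0.le]
    calc |∑ n ∈ Finset.Icc 1 N, if (n : ℤ) ∈ M then (moebius n : ℝ) else 0|
        = |∑ l : Fin m, ∑ n ∈ Finset.Icc 1 N,
            (if (n : ℤ) ∈ ⋃ i : ℤ, P l i then (moebius n : ℝ) else 0)| := by rw [e0]
      _ ≤ ∑ l : Fin m, |∑ n ∈ Finset.Icc 1 N,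
            (if (n : ℤ) ∈ ⋃ i : ℤ, P l i then (moebius n : ℝ) else 0)| :=
          Finset.abs_sum_le_sum_abs _ _
      _ ≤ ∑ l : Fin m, (ε * N + 3 * ((L * q l : ℕ) : ℝ)
            + ((L * q l : ℕ) : ℝ) * (2 * ((tF.filter (fun p => p.1 = l)).card : ℝ))) :=
          Finset.sum_le_sum fun l _ => hperl l
      _ = (m : ℝ) * (ε * N) + Cw
            + ∑ l : Fin m, ((L * q l : ℕ) : ℝ)
                * (2 * ((tF.filter (fun p => p.1 = l)).card : ℝ)) := by
          rw [Finset.sum_add_distrib, Finset.sum_add_distrib, Finset.sum_const,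
            Finset.card_univ, Fintype.card_fin, hCw]
          push_cast
          ring
      _ ≤ ((m : ℝ) + 1) * ε * N + C := by
          rw [hCdef]
          nlinarith [h5]
  -- conclusion
  have hev : ∀ᶠ N : ℕ in atTop, |mobiusSum M N| ≤ ((m : ℝ) + 2) * ε := by
    rw [eventually_atTop]
    refine ⟨max Nmax (Nat.ceil (C / ε)) + 1, fun N hN => ?_⟩
    have h1 := le_max_left Nmax (Nat.ceil (C / ε))
    have h2 := le_max_right Nmax (Nat.ceil (C / ε))
    have hN1 : 1 ≤ N := by omega
    have hNm : Nmax ≤ N := by omega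
    have hNc : Nat.ceil (C / ε) ≤ N := by omega
    have hNpos : (0 : ℝ) < N := by exact_mod_cast hN1
    have hCN : C ≤ ε * N := by
      have h3 : C / ε ≤ (Nat.ceil (C / ε) : ℝ) := Nat.le_ceil _
      have h4 : ((Nat.ceil (C / ε) : ℕ) : ℝ) ≤ (N : ℝ) := by exact_mod_cast hNc
      have h5 : C / ε ≤ (N : ℝ) := h3.trans h4
      calc C = (C / ε) * ε := by field_simp
        _ ≤ (N : ℝ) * ε := by nlinarith
        _ = ε * N := by ring
    have hb := hmain N hNm
    have habs : |mobiusSum M N| = (N : ℝ)⁻¹ *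
        |∑ n ∈ Finset.Icc 1 N, if (n : ℤ) ∈ M then (moebius n : ℝ) else 0| := by
      unfold mobiusSum
      rw [abs_mul, abs_inv, abs_of_nonneg (le_of_lt hNpos)]
    rw [habs]
    have hstep : (N : ℝ)⁻¹ *
        |∑ n ∈ Finset.Icc 1 N, if (n : ℤ) ∈ M then (moebius n : ℝ) else 0|
        ≤ (N : ℝ)⁻¹ * (((m : ℝ) + 1) * ε * N + ε * N) := by
      apply mul_le_mul_of_nonneg_left _ (by positivity)
      linarith
    refine hstep.trans ?_
    have heq2 : (N : ℝ)⁻¹ * (((m : ℝ) + 1) * ε * N + ε * N) = ((m : ℝ) + 2) * ε := by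
      field_simp
      ring
    rw [heq2]
  exact limsup_le_of_le (isCoboundedUnder_le_of_le atTop (fun N => abs_nonneg _)) hev
end
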